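/- arXiv:2301.02474 — 2 statements merged into one kernel-verified Lean document; each statement's English description precedes it below -/
import Mathlib

section
/- For n ≥ 4, the set of order-preserving partial bijections of {1,...,n} that are restrictions of elements of the dihedral group D_{2n} = {g^k, h g^k : 0 ≤ k ≤ n-1} forms an inverse submonoid of the symmetric inverse monoid I_n, i.e., it is closed under composition, contains the identity, and is closed under inversion. -/
/-- Powers in the symmetric inverse monoid (left-to-right composition). -/
def dPow (f : PartialEquiv ℕ ℕ) : ℕ → PartialEquiv ℕ ℕ
  | 0 => PartialEquiv.refl ℕ
  | k + 1 => (dPow f k).trans f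

/-- The partial identity `e_j` on `{1,…,n} \ {j}`. -/
def dE (n j : ℕ) : PartialEquiv ℕ ℕ := PartialEquiv.ofSet (Set.Icc 1 n \ {j})

/-- The `n`-cycle `g : i ↦ i+1 (mod n)` on `{1,…,n}`. -/
def dCyc (n : ℕ) : PartialEquiv ℕ ℕ where
  toFun k := if k = n then 1 else k + 1
  invFun k := if k = 1 then n else k - 1
  source := Set.Icc 1 n
  target := Set.Icc 1 n
  map_source' := by
    intro k hk
    simp only [Set.mem_Icc] at *
    split_ifs <;> omega
  map_target' := by
    intro k hk
    simp only [Set.mem_Icc] at *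
    split_ifs <;> omega
  left_inv' := by
    intro k hk
    simp only [Set.mem_Icc] at hk
    split_ifs <;> omega
  right_inv' := by
    intro k hk
    simp only [Set.mem_Icc] at hk
    split_ifs <;> omega

/-- The reversal `h : k ↦ n+1-k` on `{1,…,n}`. -/
def dRev (n : ℕ) : PartialEquiv ℕ ℕ where
  toFun k := n + 1 - k
  invFun k := n + 1 - k
  source := Set.Icc 1 n
  target := Set.Icc 1 n
  map_source' := by
    intro k hk; simp only [Set.mem_Icc] at *; omega
  map_target' := by
    intro k hk; simp only [Set.mem_Icc] at *; omega
  left_inv' := by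
    intro k hk; simp only [Set.mem_Icc] at hk; omega
  right_inv' := by
    intro k hk; simp only [Set.mem_Icc] at hk; omega

/-- The partial shift `x : j ↦ j+1` with domain `{1,…,n-1}`. -/
def dShift (n : ℕ) : PartialEquiv ℕ ℕ where
  toFun k := k + 1
  invFun k := k - 1
  source := Set.Icc 1 (n - 1)
  target := Set.Icc 2 n
  map_source' := by
    intro k hk; simp only [Set.mem_Icc] at *; omega
  map_target' := by
    intro k hk; simp only [Set.mem_Icc] at *; omega
  left_inv' := by
    intro k hk; simp only [Set.mem_Icc] at hk; omega
  right_inv' := by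
    intro k hk; simp only [Set.mem_Icc] at hk; omega

/-- The rank-2 partial bijection `x_i` with domain `{1, 1+i}`, sending
`1 ↦ 1` and `1+i ↦ n-i+1`. -/
def dXi (n i : ℕ) (h1 : 1 ≤ i) (h2 : i < n) : PartialEquiv ℕ ℕ where
  toFun k := if k = 1 then 1 else n - i + 1
  invFun k := if k = 1 then 1 else 1 + i
  source := {1, 1 + i}
  target := {1, n - i + 1}
  map_source' := by
    intro k _
    split_ifs <;> simp
  map_target' := by
    intro k _
    split_ifs <;> simp
  left_inv' := by
    intro k hk
    simp only [Set.mem_insert_iff, Set.mem_singleton_iff] at hk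
    rcases hk with rfl | rfl <;> (split_ifs <;> omega)
  right_inv' := by
    intro k hk
    simp only [Set.mem_insert_iff, Set.mem_singleton_iff] at hk
    rcases hk with rfl | rfl <;> (split_ifs <;> omega)

/-- `ODI_n`: the order-preserving partial bijections of `{1,…,n}` which are
restrictions of elements `g^k` or `h g^k` of the dihedral group. -/
def ODI (n : ℕ) : Set (PartialEquiv ℕ ℕ) :=
  {α | α.source ⊆ Set.Icc 1 n ∧
    (∀ u ∈ α.source, ∀ v ∈ α.source, u ≤ v → α u ≤ α v) ∧
    ∃ k : ℕ, Set.EqOn (↑α) (↑(dPow (dCyc n) k)) α.source ∨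
      Set.EqOn (↑α) (↑((dRev n).trans (dPow (dCyc n) k))) α.source}

lemma myModCast {n a b : ℕ} (h : (a : ZMod n) = (b : ZMod n)) : a % n = b % n :=
  (ZMod.natCast_eq_natCast_iff a b n).mp h

lemma myPowEval (n : ℕ) (hn : 0 < n) (k x : ℕ) (hx1 : 1 ≤ x) (hx2 : x ≤ n) :
    (dPow (dCyc n) k) x = (x - 1 + k) % n + 1 := by
  induction k with
  | zero =>
    show x = (x - 1 + 0) % n + 1
    rw [Nat.mod_eq_of_lt (by omega)]; omega
  | succ k ih =>
    have hr : (x - 1 + k) % n < n := Nat.mod_lt _ hn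
    have hs : (x - 1 + (k+1)) % n = ((x - 1 + k) % n + 1) % n := by
      apply myModCast; push_cast [ZMod.natCast_mod]; ring
    show (dCyc n) ((dPow (dCyc n) k) x) = _
    rw [ih]
    show (if (x-1+k)%n + 1 = n then 1 else (x-1+k)%n + 1 + 1) = _
    by_cases h : (x-1+k)%n + 1 = n
    · rw [if_pos h, hs, h, Nat.mod_self]
    · rw [if_neg h, hs, Nat.mod_eq_of_lt (show (x-1+k)%n + 1 < n by omega)]

lemma myHEval (n : ℕ) (hn : 0 < n) (k x : ℕ) (hx1 : 1 ≤ x) (hx2 : x ≤ n) :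
    ((dRev n).trans (dPow (dCyc n) k)) x = (n - x + k) % n + 1 := by
  show (dPow (dCyc n) k) ((dRev n) x) = _
  show (dPow (dCyc n) k) (n + 1 - x) = _
  rw [myPowEval n hn k (n + 1 - x) (by omega) (by omega)]
  have : n + 1 - x - 1 = n - x := by omega
  rw [this]

/-- For `n ≥ 4`, `ODI_n` is an inverse submonoid of the symmetric inverse
monoid: closed under composition, containing the identity, and closed under
inversion. -/
theorem stmt15 (n : ℕ) (hn : 4 ≤ n) :
    (∀ α ∈ ODI n, ∀ β ∈ ODI n, α.trans β ∈ ODI n) ∧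
    PartialEquiv.ofSet (Set.Icc 1 n) ∈ ODI n ∧
    (∀ α ∈ ODI n, α.symm ∈ ODI n) := by
  have hn0 : 0 < n := by omega
  refine ⟨?_, ?_, ?_⟩
  · -- closed under composition
    rintro α ⟨hαs, hαm, k, hα⟩ β ⟨hβs, hβm, l, hβ⟩
    have hts : (α.trans β).source = α.source ∩ ↑α ⁻¹' β.source := α.trans_source β
    refine ⟨?_, ?_, ?_⟩
    · rw [hts]; exact Set.inter_subset_left.trans hαs
    · intro u hu v hv huv
      rw [hts] at hu hv
      simp only [PartialEquiv.coe_trans, Function.comp_apply]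
      exact hβm _ hu.2 _ hv.2 (hαm _ hu.1 _ hv.1 huv)
    · rcases hα with hα | hα <;> rcases hβ with hβ | hβ
      · -- g^k then g^l
        refine ⟨k + l, Or.inl ?_⟩
        intro x hx
        rw [hts] at hx
        have hxI := hαs hx.1
        simp only [Set.mem_Icc] at hxI
        have hax : (α : ℕ → ℕ) x = (x - 1 + k) % n + 1 :=
          (hα hx.1).trans (myPowEval n hn0 k x hxI.1 hxI.2)
        have hr : (x - 1 + k) % n < n := Nat.mod_lt _ hn0
        simp only [PartialEquiv.coe_trans, Function.comp_apply]
        rw [hβ hx.2, hax, myPowEval n hn0 l _ (by omega) (by omega),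
            myPowEval n hn0 (k + l) x hxI.1 hxI.2]
        have key : ((x - 1 + k) % n + 1 - 1 + l) % n = (x - 1 + (k + l)) % n := by
          apply myModCast
          push_cast [ZMod.natCast_mod]
          ring
        omega
      · -- g^k then h g^l
        refine ⟨l + (n - k % n), Or.inr ?_⟩
        intro x hx
        rw [hts] at hx
        have hxI := hαs hx.1
        simp only [Set.mem_Icc] at hxI
        have hax : (α : ℕ → ℕ) x = (x - 1 + k) % n + 1 :=
          (hα hx.1).trans (myPowEval n hn0 k x hxI.1 hxI.2)
        have hr : (x - 1 + k) % n < n := Nat.mod_lt _ hn0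
        rw [myHEval n hn0 (l + (n - k % n)) x hxI.1 hxI.2]
        simp only [PartialEquiv.coe_trans, Function.comp_apply]
        rw [hβ hx.2, hax, myHEval n hn0 l _ (by omega) (by omega)]
        have key : (n - ((x - 1 + k) % n + 1) + l) % n
            = (n - x + (l + (n - k % n))) % n := by
          apply myModCast
          push_cast [ZMod.natCast_mod, Nat.cast_sub (show (x-1+k) % n + 1 ≤ n by omega),
            Nat.cast_sub (show x ≤ n from hxI.2),
            Nat.cast_sub (show k % n ≤ n from (Nat.mod_lt k hn0).le),
            Nat.cast_sub (show 1 ≤ x from hxI.1)]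
          rw [ZMod.natCast_self]
          ring
        omega
      · -- h g^k then g^l
        refine ⟨k + l, Or.inr ?_⟩
        intro x hx
        rw [hts] at hx
        have hxI := hαs hx.1
        simp only [Set.mem_Icc] at hxI
        have hax : (α : ℕ → ℕ) x = (n - x + k) % n + 1 :=
          (hα hx.1).trans (myHEval n hn0 k x hxI.1 hxI.2)
        have hr : (n - x + k) % n < n := Nat.mod_lt _ hn0
        rw [myHEval n hn0 (k + l) x hxI.1 hxI.2]
        simp only [PartialEquiv.coe_trans, Function.comp_apply]
        rw [hβ hx.2, hax, myPowEval n hn0 l _ (by omega) (by omega)]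
        have key : ((n - x + k) % n + 1 - 1 + l) % n = (n - x + (k + l)) % n := by
          apply myModCast
          push_cast [ZMod.natCast_mod]
          ring
        omega
      · -- h g^k then h g^l
        refine ⟨l + (n - k % n), Or.inl ?_⟩
        intro x hx
        rw [hts] at hx
        have hxI := hαs hx.1
        simp only [Set.mem_Icc] at hxI
        have hax : (α : ℕ → ℕ) x = (n - x + k) % n + 1 :=
          (hα hx.1).trans (myHEval n hn0 k x hxI.1 hxI.2)
        have hr : (n - x + k) % n < n := Nat.mod_lt _ hn0
        simp only [PartialEquiv.coe_trans, Function.comp_apply]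
        rw [hβ hx.2, hax, myHEval n hn0 l _ (by omega) (by omega),
            myPowEval n hn0 (l + (n - k % n)) x hxI.1 hxI.2]
        have key : (n - ((n - x + k) % n + 1) + l) % n
            = (x - 1 + (l + (n - k % n))) % n := by
          apply myModCast
          push_cast [ZMod.natCast_mod, Nat.cast_sub (show (n-x+k) % n + 1 ≤ n by omega),
            Nat.cast_sub (show x ≤ n from hxI.2),
            Nat.cast_sub (show k % n ≤ n from (Nat.mod_lt k hn0).le),
            Nat.cast_sub (show 1 ≤ x from hxI.1)]
          rw [ZMod.natCast_self]
          ring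
        omega
  · -- identity
    refine ⟨fun x hx => hx, fun u _ v _ huv => huv, 0, Or.inl fun x _ => rfl⟩
  · -- closed under inversion
    rintro α ⟨hαs, hαm, k, hα⟩
    have ht : α.symm.source = α.target := α.symm_source
    refine ⟨?_, ?_, ?_⟩
    · intro y hy
      rw [ht] at hy
      have hx := α.map_target hy
      have hxy := α.right_inv hy
      have hxI := hαs hx
      simp only [Set.mem_Icc] at hxI
      simp only [Set.mem_Icc]
      rcases hα with hα | hα
      · have hay := (hα hx).trans (myPowEval n hn0 k _ hxI.1 hxI.2)
        rw [hxy] at hay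
        have hr : (α.symm y - 1 + k) % n < n := Nat.mod_lt _ hn0
        omega
      · have hay := (hα hx).trans (myHEval n hn0 k _ hxI.1 hxI.2)
        rw [hxy] at hay
        have hr : (n - α.symm y + k) % n < n := Nat.mod_lt _ hn0
        omega
    · intro u hu v hv huv
      rw [ht] at hu hv
      rcases le_or_gt (α.symm u) (α.symm v) with h | h
      · exact h
      · have h2 := hαm _ (α.map_target hv) _ (α.map_target hu) h.le
        rw [α.right_inv hu, α.right_inv hv] at h2
        have huv' : u = v := le_antisymm huv h2
        subst huv'
        exact le_refl _
    · rcases hα with hα | hα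
      · refine ⟨n - k % n, Or.inl ?_⟩
        intro y hy
        rw [ht] at hy
        have hx := α.map_target hy
        have hxy := α.right_inv hy
        have hxI := hαs hx
        simp only [Set.mem_Icc] at hxI
        have hay := (hα hx).trans (myPowEval n hn0 k _ hxI.1 hxI.2)
        rw [hxy] at hay
        have hr : (α.symm y - 1 + k) % n < n := Nat.mod_lt _ hn0
        rw [myPowEval n hn0 (n - k % n) y (by omega) (by omega)]
        rw [show y - 1 = (α.symm y - 1 + k) % n by omega]
        have key : ((α.symm y - 1 + k) % n + (n - k % n)) % n
            = (α.symm y - 1) % n := by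
          apply myModCast
          push_cast [ZMod.natCast_mod,
            Nat.cast_sub (show k % n ≤ n from (Nat.mod_lt k hn0).le)]
          rw [ZMod.natCast_self]
          ring
        rw [key, Nat.mod_eq_of_lt (show α.symm y - 1 < n by omega)]
        omega
      · refine ⟨k, Or.inr ?_⟩
        intro y hy
        rw [ht] at hy
        have hx := α.map_target hy
        have hxy := α.right_inv hy
        have hxI := hαs hx
        simp only [Set.mem_Icc] at hxI
        have hay := (hα hx).trans (myHEval n hn0 k _ hxI.1 hxI.2)
        rw [hxy] at hay
        have hr : (n - α.symm y + k) % n < n := Nat.mod_lt _ hn0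
        rw [myHEval n hn0 k y (by omega) (by omega)]
        have key : (n - y + k) % n = (α.symm y - 1) % n := by
          rw [show n - y = n - ((n - α.symm y + k) % n + 1) by omega]
          apply myModCast
          push_cast [ZMod.natCast_mod,
            Nat.cast_sub (show (n - α.symm y + k) % n + 1 ≤ n by omega),
            Nat.cast_sub (show α.symm y ≤ n from hxI.2),
            Nat.cast_sub (show 1 ≤ α.symm y from hxI.1)]
          rw [ZMod.natCast_self]
          ring
        rw [key, Nat.mod_eq_of_lt (show α.symm y - 1 < n by omega)]
        omega
end

section
/- For n ≥ 4, every element of the dihedral inverse monoid DI_n (the set of all restrictions of elements of the dihedral group D_{2n} ≤ Sym_n) is a product of elements from {g, h, e_n}; that is, {g, h, e_n} generates DI_n as a monoid. -/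
/-- `DI_n`: the partial bijections of `{1,…,n}` which are restrictions of
elements `g^k` or `h g^k` of the dihedral group. -/
def DI (n : ℕ) : Set (PartialEquiv ℕ ℕ) :=
  {α | α.source ⊆ Set.Icc 1 n ∧
    ∃ k : ℕ, Set.EqOn (↑α) (↑(dPow (dCyc n) k)) α.source ∨
      Set.EqOn (↑α) (↑((dRev n).trans (dPow (dCyc n) k))) α.source}

noncomputable section DIAux

open PartialEquiv Set

/-- Product (left-to-right) of a list of partial equivs. -/
def dProd (l : List (PartialEquiv ℕ ℕ)) : PartialEquiv ℕ ℕ :=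
  l.foldl PartialEquiv.trans (PartialEquiv.refl ℕ)

lemma foldl_trans_eq (l : List (PartialEquiv ℕ ℕ)) (a : PartialEquiv ℕ ℕ) :
    l.foldl PartialEquiv.trans a = a.trans (dProd l) := by
  induction l generalizing a with
  | nil => simp [dProd]
  | cons b l ih =>
    have h1 : dProd (b :: l) = b.trans (dProd l) := by
      show List.foldl _ ((PartialEquiv.refl ℕ).trans b) l = _
      rw [PartialEquiv.refl_trans, ih b]
    rw [List.foldl_cons, ih (a.trans b), h1, PartialEquiv.trans_assoc]

lemma dProd_append (l1 l2 : List (PartialEquiv ℕ ℕ)) :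
    dProd (l1 ++ l2) = (dProd l1).trans (dProd l2) := by
  simp only [dProd, List.foldl_append]
  exact foldl_trans_eq l2 _

lemma dProd_cons (a : PartialEquiv ℕ ℕ) (l : List (PartialEquiv ℕ ℕ)) :
    dProd (a :: l) = a.trans (dProd l) := by
  rw [show dProd (a :: l) = List.foldl PartialEquiv.trans
      ((PartialEquiv.refl ℕ).trans a) l from rfl,
    PartialEquiv.refl_trans, foldl_trans_eq]

lemma dProd_replicate (n k : ℕ) :
    dProd (List.replicate k (dCyc n)) = dPow (dCyc n) k := by
  induction k with
  | zero => simp [dProd, dPow]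
  | succ k ih =>
    rw [List.replicate_succ', dProd_append, ih]
    show (dPow (dCyc n) k).trans ((PartialEquiv.refl ℕ).trans (dCyc n)) = _
    rw [PartialEquiv.refl_trans]
    rfl

lemma ofSet_trans_ofSet' (a b : Set ℕ) :
    (PartialEquiv.ofSet a).trans (PartialEquiv.ofSet b) ≈ PartialEquiv.ofSet (a ∩ b) := by
  constructor
  · simp [PartialEquiv.trans_source, PartialEquiv.ofSet]
  · intro x _; rfl

lemma ofSet_absorb {a b : Set ℕ} (h : a ⊆ b) :
    PartialEquiv.ofSet a ≈ (PartialEquiv.ofSet a).trans (PartialEquiv.ofSet b) := by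
  constructor
  · simp only [PartialEquiv.trans_source, PartialEquiv.ofSet]
    ext x; simp only [Set.mem_inter_iff, Set.mem_preimage, id_eq]
    exact ⟨fun hx => ⟨hx, h hx⟩, fun hx => hx.1⟩
  · intro x _; rfl

/-- source and value formula for powers of the cycle. -/
lemma dPow_spec (n : ℕ) (hn : 1 ≤ n) (k : ℕ) :
    Set.Icc 1 n ⊆ (dPow (dCyc n) k).source ∧
      ∀ x ∈ Set.Icc 1 n, (dPow (dCyc n) k) x = (x - 1 + k) % n + 1 := by
  induction k with
  | zero =>
    refine ⟨by simp [dPow], ?_⟩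
    intro x hx
    simp only [Set.mem_Icc] at hx
    have h1 : (x - 1 + 0) % n = x - 1 := by
      apply Nat.mod_eq_of_lt; omega
    show x = (x - 1 + 0) % n + 1
    rw [h1]
    omega
  | succ k ih =>
    obtain ⟨ihs, ihv⟩ := ih
    have key : ∀ x ∈ Set.Icc 1 n, (x - 1 + k) % n + 1 ∈ Set.Icc 1 n ∧
        (dCyc n) ((x - 1 + k) % n + 1) = (x - 1 + (k + 1)) % n + 1 := by
      intro x hx
      simp only [Set.mem_Icc] at hx
      set a := x - 1 + k with ha
      have hm : a % n < n := Nat.mod_lt _ (by omega)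
      have hdm := Nat.div_add_mod a n
      constructor
      · simp only [Set.mem_Icc]; omega
      · show (if a % n + 1 = n then 1 else a % n + 1 + 1) = (a + 1) % n + 1
        by_cases hc : a % n + 1 = n
        · have hq : n * (a / n + 1) = n * (a / n) + n := by ring
          have h2 : a + 1 = n * (a / n + 1) := by omega
          have h3 : (a + 1) % n = 0 := by rw [h2, Nat.mul_mod_right]
          rw [if_pos hc, h3]
        · have h2 : a + 1 = n * (a / n) + (a % n + 1) := by omega
          have h3 : (a + 1) % n = a % n + 1 := by
            rw [h2, Nat.mul_add_mod]
            exact Nat.mod_eq_of_lt (by omega)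
          rw [if_neg hc, h3]
    constructor
    · intro x hx
      rw [show dPow (dCyc n) (k + 1) = (dPow (dCyc n) k).trans (dCyc n) from rfl,
        PartialEquiv.trans_source]
      refine ⟨ihs hx, ?_⟩
      rw [Set.mem_preimage, ihv x hx]
      exact (key x hx).1
    · intro x hx
      show (dCyc n) ((dPow (dCyc n) k) x) = _
      rw [ihv x hx]
      exact (key x hx).2

/-- The word for the partial identity `e_j`. -/
def dWordE (n j : ℕ) : List (PartialEquiv ℕ ℕ) :=
  List.replicate (n - j) (dCyc n) ++ (dE n n :: List.replicate j (dCyc n))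

lemma dWordE_mem (n j : ℕ) : ∀ w ∈ dWordE n j, w = dCyc n ∨ w = dRev n ∨ w = dE n n := by
  intro w hw
  simp only [dWordE, List.mem_append, List.mem_cons, List.mem_replicate] at hw
  rcases hw with h | h | h
  · exact Or.inl h.2
  · exact Or.inr (Or.inr h)
  · exact Or.inl h.2

/-- key lemma: the word `g^(n-j) e_n g^j` computes `e_j`. -/
lemma dWordE_spec (n j : ℕ) (hn : 1 ≤ n) (hj1 : 1 ≤ j) (hj2 : j ≤ n) :
    (PartialEquiv.ofSet (Set.Icc 1 n)).trans (dProd (dWordE n j)) ≈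
      PartialEquiv.ofSet (Set.Icc 1 n \ {j}) := by
  obtain ⟨hAs, hAv⟩ := dPow_spec n hn (n - j)
  obtain ⟨hBs, hBv⟩ := dPow_spec n hn j
  have hprod : dProd (dWordE n j) =
      (dPow (dCyc n) (n - j)).trans ((dE n n).trans (dPow (dCyc n) j)) := by
    rw [dWordE, dProd_append, dProd_cons, dProd_replicate, dProd_replicate]
  -- the key arithmetic facts
  have hAval : ∀ x ∈ Set.Icc 1 n, (dPow (dCyc n) (n-j)) x ∈ Set.Icc 1 n ∧
      ((dPow (dCyc n) (n-j)) x = n ↔ x = j) ∧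
      (dPow (dCyc n) j) ((dPow (dCyc n) (n-j)) x) = x := by
    intro x hx
    have hx' := hx
    simp only [Set.mem_Icc] at hx'
    rw [hAv x hx]
    set a := x - 1 + (n - j) with ha
    have hm : a % n < n := Nat.mod_lt _ (by omega)
    have hmem : a % n + 1 ∈ Set.Icc 1 n := by simp only [Set.mem_Icc]; omega
    have hmod : a % n = (if x ≤ j then a else a - n) := by
      by_cases hc : x ≤ j
      · rw [if_pos hc]; apply Nat.mod_eq_of_lt; omega
      · rw [if_neg hc, Nat.mod_eq_sub_mod (by omega)]
        apply Nat.mod_eq_of_lt; omega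
    refine ⟨hmem, ?_, ?_⟩
    · constructor
      · intro h; split_ifs at hmod <;> omega
      · intro h; split_ifs at hmod <;> omega
    · rw [hBv _ hmem]
      have h1 : a % n + 1 - 1 + j = a % n + j := by omega
      rw [h1, Nat.mod_add_mod]
      have h2 : a + j = x - 1 + n := by omega
      rw [h2, Nat.add_mod_right, Nat.mod_eq_of_lt (by omega)]
      omega
  constructor
  · -- sources agree
    rw [hprod]
    simp only [PartialEquiv.trans_source, PartialEquiv.ofSet]
    ext x
    simp only [Set.mem_inter_iff, Set.mem_preimage, id_eq, Set.mem_diff,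
      Set.mem_singleton_iff]
    constructor
    · rintro ⟨hx, -, h2⟩
      refine ⟨hx, ?_⟩
      obtain ⟨-, hiff, -⟩ := hAval x hx
      have hE : (dPow (dCyc n) (n - j)) x ∈ Set.Icc 1 n \ {n} := h2.1
      intro hxj
      exact hE.2 (hiff.2 hxj)
    · rintro ⟨hx, hxj⟩
      obtain ⟨hmem, hiff, -⟩ := hAval x hx
      refine ⟨hx, hAs hx, ?_⟩
      have hAn : (dPow (dCyc n) (n-j)) x ≠ n := fun h => hxj (hiff.1 h)
      exact ⟨show _ ∈ Set.Icc 1 n \ {n} from ⟨hmem, hAn⟩, hBs hmem⟩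
  · -- values agree
    intro x hx
    simp only [PartialEquiv.trans_source, PartialEquiv.ofSet, Set.mem_inter_iff] at hx
    obtain ⟨hx1, -⟩ := hx
    rw [hprod]
    simp only [PartialEquiv.coe_trans, Function.comp_apply]
    show (dPow (dCyc n) j) ((dE n n) ((dPow (dCyc n) (n-j)) ((PartialEquiv.ofSet _) x))) = _
    have hE : ∀ y : ℕ, (dE n n) y = y := fun y => rfl
    have hO : (PartialEquiv.ofSet (Set.Icc 1 n)) x = x := rfl
    rw [hO, hE]
    exact ((hAval x hx1).2.2)

/-- Concatenation of identity words. -/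
def dFlat (n : ℕ) : List ℕ → List (PartialEquiv ℕ ℕ)
  | [] => []
  | j :: js => dWordE n j ++ dFlat n js

lemma dFlat_mem (n : ℕ) (js : List ℕ) :
    ∀ w ∈ dFlat n js, w = dCyc n ∨ w = dRev n ∨ w = dE n n := by
  induction js with
  | nil => intro w hw; simp [dFlat] at hw
  | cons j js ih =>
    intro w hw
    rw [show dFlat n (j :: js) = dWordE n j ++ dFlat n js from rfl, List.mem_append] at hw
    rcases hw with hw | hw
    · exact dWordE_mem n j w hw
    · exact ih w hw

lemma idList_spec (n : ℕ) (hn : 1 ≤ n) (js : List ℕ)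
    (hjs : ∀ j ∈ js, j ∈ Set.Icc 1 n) :
    (PartialEquiv.ofSet (Set.Icc 1 n)).trans (dProd (dFlat n js)) ≈
      PartialEquiv.ofSet (Set.Icc 1 n \ {x | x ∈ js}) := by
  induction js with
  | nil =>
    rw [show dProd (dFlat n []) = PartialEquiv.refl ℕ from rfl, PartialEquiv.trans_refl]
    have h : Set.Icc 1 n \ {x | x ∈ ([] : List ℕ)} = Set.Icc 1 n := by simp
    rw [h]
  | cons j js ih =>
    have hj := hjs j (List.mem_cons_self)
    simp only [Set.mem_Icc] at hj
    have step1 : (PartialEquiv.ofSet (Set.Icc 1 n)).trans (dProd (dFlat n (j :: js))) =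
        ((PartialEquiv.ofSet (Set.Icc 1 n)).trans (dProd (dWordE n j))).trans
          (dProd (dFlat n js)) := by
      rw [show dFlat n (j :: js) = dWordE n j ++ dFlat n js from rfl, dProd_append,
        ← PartialEquiv.trans_assoc]
    rw [step1]
    refine Setoid.trans (PartialEquiv.EqOnSource.trans'
      (dWordE_spec n j hn hj.1 hj.2) (Setoid.refl (dProd (dFlat n js)))) ?_
    refine Setoid.trans (PartialEquiv.EqOnSource.trans'
      (ofSet_absorb (show Set.Icc 1 n \ {j} ⊆ Set.Icc 1 n from Set.diff_subset))
      (Setoid.refl (dProd (dFlat n js)))) ?_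
    rw [PartialEquiv.trans_assoc]
    refine Setoid.trans (PartialEquiv.EqOnSource.trans'
      (Setoid.refl (PartialEquiv.ofSet (Set.Icc 1 n \ {j})))
      (ih (fun x hx => hjs x (List.mem_cons_of_mem j hx)))) ?_
    refine Setoid.trans (ofSet_trans_ofSet' _ _) ?_
    have h : (Set.Icc 1 n \ {j}) ∩ (Set.Icc 1 n \ {x | x ∈ js}) =
        Set.Icc 1 n \ {x | x ∈ j :: js} := by
      ext x
      simp only [Set.mem_inter_iff, Set.mem_diff, Set.mem_singleton_iff,
        Set.mem_setOf_eq, List.mem_cons]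
      tauto
    rw [h]


end DIAux

/-- For `n ≥ 4`, every element of `DI_n` is a product (left-to-right fold,
starting from the identity of `I_n`) of elements from `{g, h, e_n}`. -/




theorem stmt17 (n : ℕ) (hn : 4 ≤ n) (α : PartialEquiv ℕ ℕ) (hα : α ∈ DI n) :
    ∃ l : List (PartialEquiv ℕ ℕ),
      (∀ w ∈ l, w = dCyc n ∨ w = dRev n ∨ w = dE n n) ∧
      α ≈ l.foldl PartialEquiv.trans (PartialEquiv.ofSet (Set.Icc 1 n)) := by
  obtain ⟨hS, k, hcase⟩ := hα
  have hn1 : 1 ≤ n := by omega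
  have hfin : (Set.Icc 1 n \ α.source).Finite :=
    (Set.finite_Icc 1 n).subset Set.diff_subset
  set js := hfin.toFinset.toList with hjsdef
  have hjs : ∀ j ∈ js, j ∈ Set.Icc 1 n := by
    intro j hj
    rw [hjsdef, Finset.mem_toList, Set.Finite.mem_toFinset] at hj
    exact hj.1
  have hSset : Set.Icc 1 n \ {x | x ∈ js} = α.source := by
    have hsetjs : {x | x ∈ js} = Set.Icc 1 n \ α.source := by
      ext x
      simp [hjsdef, Finset.mem_toList, Set.Finite.mem_toFinset]
    rw [hsetjs]
    ext x
    constructor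
    · rintro ⟨hx1, hx2⟩
      by_contra h
      exact hx2 ⟨hx1, h⟩
    · intro hx
      exact ⟨hS hx, fun h => h.2 hx⟩
  have main : ∀ (σ : PartialEquiv ℕ ℕ) (sigl : List (PartialEquiv ℕ ℕ)),
      dProd sigl = σ → (∀ w ∈ sigl, w = dCyc n ∨ w = dRev n ∨ w = dE n n) →
      Set.Icc 1 n ⊆ σ.source → Set.EqOn (↑α) (↑σ) α.source →
      ∃ l : List (PartialEquiv ℕ ℕ),
        (∀ w ∈ l, w = dCyc n ∨ w = dRev n ∨ w = dE n n) ∧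
        α ≈ l.foldl PartialEquiv.trans (PartialEquiv.ofSet (Set.Icc 1 n)) := by
    intro σ sigl hsig hmem hsrc heq
    refine ⟨dFlat n js ++ sigl, ?_, ?_⟩
    · intro w hw
      rw [List.mem_append] at hw
      rcases hw with hw | hw
      · exact dFlat_mem n js w hw
      · exact hmem w hw
    · have hfold : (dFlat n js ++ sigl).foldl PartialEquiv.trans
          (PartialEquiv.ofSet (Set.Icc 1 n)) =
          ((PartialEquiv.ofSet (Set.Icc 1 n)).trans (dProd (dFlat n js))).trans σ := by
        rw [foldl_trans_eq, dProd_append, hsig, ← PartialEquiv.trans_assoc]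
      rw [hfold]
      have h1 := PartialEquiv.EqOnSource.trans' (idList_spec n hn1 js hjs) (Setoid.refl σ)
      rw [hSset] at h1
      refine Setoid.trans ?_ (Setoid.symm h1)
      constructor
      · rw [PartialEquiv.trans_source]
        have h2 : (PartialEquiv.ofSet α.source).source = α.source := rfl
        have h3 : ((PartialEquiv.ofSet α.source : PartialEquiv ℕ ℕ) : ℕ → ℕ) = id := rfl
        rw [h2, h3, Set.preimage_id]
        exact (Set.inter_eq_self_of_subset_left (fun x hx => hsrc (hS hx))).symm
      · intro x hx
        exact heq hx
  rcases hcase with hEq | hEq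
  · refine main (dPow (dCyc n) k) (List.replicate k (dCyc n)) (dProd_replicate n k) ?_
      (dPow_spec n hn1 k).1 hEq
    intro w hw
    rw [List.mem_replicate] at hw
    exact Or.inl hw.2
  · refine main ((dRev n).trans (dPow (dCyc n) k)) (dRev n :: List.replicate k (dCyc n))
      ?_ ?_ ?_ hEq
    · rw [dProd_cons, dProd_replicate]
    · intro w hw
      rw [List.mem_cons, List.mem_replicate] at hw
      rcases hw with hw | hw
      · exact Or.inr (Or.inl hw)
      · exact Or.inl hw.2
    · intro x hx
      rw [PartialEquiv.trans_source]
      refine ⟨hx, ?_⟩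
      rw [Set.mem_preimage]
      apply (dPow_spec n hn1 k).1
      simp only [Set.mem_Icc] at hx ⊢
      show 1 ≤ n + 1 - x ∧ n + 1 - x ≤ n
      omega
end
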